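/- For H ∈ L (Lebesgue measurable subsets of ℝ) and n ∈ ℤ define μ_n(H) = +∞ if λ(H ∩ [n+1,∞)) > 0 and μ_n(H) = λ(H ∩ [n,n+1)) otherwise. Then ⟨L, μ_n : n ∈ ℤ⟩ is a dimension structure. -/

import Mathlib

open MeasureTheory Set

open Classical in
/-- `μ_n(H) = +∞` if `λ(H ∩ [n+1,∞)) > 0`, else `λ(H ∩ [n,n+1))`. -/
noncomputable def muLeb (n : ℤ) (H : Set ℝ) : ENNReal :=
  if 0 < volume (H ∩ Ici ((n : ℝ) + 1)) then ⊤ else volume (H ∩ Ico (n : ℝ) ((n : ℝ) + 1))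

theorem stmt13 :
    (∀ H : Set ℝ, MeasurableSet H → ∀ m n : ℤ, m < n → muLeb m H ≠ ⊤ → muLeb n H = 0) ∧
    (∀ H : Set ℝ, MeasurableSet H → ∀ m n : ℤ, 0 < muLeb m H → muLeb m H ≠ ⊤ →
      muLeb n H ≠ ⊤ → m ≤ n ∨ n ≤ m) ∧
    (∀ H : Set ℝ, MeasurableSet H → ∃ d : WithBot (WithTop ℤ),
      IsGLB ((fun n : ℤ => ((n : WithTop ℤ) : WithBot (WithTop ℤ))) '' {n | muLeb n H = 0}) d) := by
  refine ⟨fun H _ m n hmn hm => ?_, fun H _ m n _ _ _ => le_total m n,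
    fun H _ => ⟨_, isGLB_sInf _⟩⟩
  unfold muLeb at *
  split_ifs at hm with h
  · exact absurd rfl hm
  push_neg at h
  have h0 : volume (H ∩ Ici ((m : ℝ) + 1)) = 0 := le_antisymm h zero_le
  have key : ((m : ℝ) + 1) ≤ (n : ℝ) := by exact_mod_cast hmn
  have h1 : volume (H ∩ Ici ((n : ℝ) + 1)) = 0 :=
    measure_mono_null (inter_subset_inter_right _ (Ici_subset_Ici.2 (by linarith))) h0
  rw [if_neg (by simp [h1])]
  exact measure_mono_null (inter_subset_inter_right _
    (Ico_subset_Icc_self.trans (Icc_subset_Ici_self.trans (Ici_subset_Ici.2 key)))) h0
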